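/- Suppose for every c > 0 and every ρ > 0 there exists R ≥ ρ with f(R) ≤ a − e^{−cR}, where f : [0,∞) → (0,∞) is non-decreasing with limit a > 0 at infinity. Then it is impossible to have τ > 0 and R₀ > 0 such that f(R+τ) > a^{1/n} f(R)^{(n-1)/n} for all R ≥ R₀ (where n ≥ 2 is a fixed integer). -/

import Mathlib

open Filter

/-- If `f : [0,∞) → (0,∞)` is non-decreasing with limit `a > 0` at infinity
and for every `c > 0`, `ρ > 0` there is `R ≥ ρ` with `f(R) ≤ a − e^{−cR}`, then there
cannot exist `τ > 0` and `R₀ > 0` with `f(R+τ) > a^{1/n} f(R)^{(n-1)/n}` for all `R ≥ R₀`. -/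
theorem no_fast_growth {n : ℕ} (hn : 2 ≤ n) (a : ℝ) (ha : 0 < a) (f : ℝ → ℝ)
    (hpos : ∀ R ≥ (0 : ℝ), 0 < f R)
    (hmono : MonotoneOn f (Set.Ici (0 : ℝ)))
    (hlim : Tendsto f atTop (nhds a))
    (h : ∀ c > (0 : ℝ), ∀ ρ > (0 : ℝ), ∃ R ≥ ρ, f R ≤ a - Real.exp (-c * R)) :
    ¬ ∃ τ > (0 : ℝ), ∃ R₀ > (0 : ℝ), ∀ R ≥ R₀,
        a ^ ((1 : ℝ) / n) * f R ^ (((n : ℝ) - 1) / n) < f (R + τ) := by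
  rintro ⟨τ, hτ, R₀, hR₀, H⟩
  have hn0 : (0:ℝ) < (n:ℝ) := by positivity
  have hn1 : (1:ℝ) ≤ (n:ℝ) - 1 := by
    have : (2:ℝ) ≤ (n:ℝ) := by exact_mod_cast hn
    linarith
  set θ : ℝ := ((n:ℝ) - 1) / n with hθdef
  have hθpos : 0 < θ := by positivity
  have hθlt1 : θ < 1 := by
    rw [hθdef, div_lt_one hn0]; linarith
  have hfR₀pos : 0 < f R₀ := hpos R₀ hR₀.le
  have hfR₀a : f R₀ ≤ a := by
    refine ge_of_tendsto hlim ?_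
    filter_upwards [eventually_ge_atTop R₀] with x hx
    exact hmono hR₀.le (le_trans hR₀.le hx) hx
  have hratpos : 0 < f R₀ / a := by positivity
  -- key induction
  have key : ∀ k : ℕ, a * (f R₀ / a) ^ (θ ^ k : ℝ) ≤ f (R₀ + k * τ) := by
    intro k
    induction k with
    | zero =>
      simp only [Nat.cast_zero, zero_mul, add_zero, pow_zero]
      rw [Real.rpow_one]
      rw [mul_div_cancel₀ _ (ne_of_gt ha)]
    | succ k ih =>
      have hx : R₀ ≤ R₀ + k * τ := by
        have : (0:ℝ) ≤ (k:ℝ) * τ := by positivity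
        linarith
      have hfx : 0 < f (R₀ + k * τ) := hpos _ (le_trans hR₀.le hx)
      have h1 := H (R₀ + k * τ) hx
      have h2 : a ^ ((1:ℝ)/n) * (a * (f R₀ / a) ^ (θ ^ k : ℝ)) ^ θ ≤
          a ^ ((1:ℝ)/n) * f (R₀ + k * τ) ^ θ := by
        apply mul_le_mul_of_nonneg_left
        · exact Real.rpow_le_rpow (by positivity) ih hθpos.le
        · positivity
      have h3 : a ^ ((1:ℝ)/n) * (a * (f R₀ / a) ^ (θ ^ k : ℝ)) ^ θ =
          a * (f R₀ / a) ^ (θ ^ (k+1) : ℝ) := by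
        rw [Real.mul_rpow ha.le (by positivity), ← Real.rpow_mul hratpos.le,
          ← mul_assoc, ← Real.rpow_add ha]
        have he : (1:ℝ)/n + θ = 1 := by
          rw [hθdef]; field_simp; ring
        rw [he, Real.rpow_one, ← pow_succ]
      have h4 : R₀ + (k:ℝ) * τ + τ = R₀ + ((k:ℕ)+1 : ℕ) * τ := by push_cast; ring
      calc a * (f R₀ / a) ^ (θ ^ (k+1) : ℝ) = a ^ ((1:ℝ)/n) * (a * (f R₀ / a) ^ (θ ^ k : ℝ)) ^ θ := h3.symm
        _ ≤ a ^ ((1:ℝ)/n) * f (R₀ + k * τ) ^ θ := h2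
        _ ≤ f (R₀ + k * τ + τ) := h1.le
        _ = f (R₀ + ((k+1:ℕ):ℝ) * τ) := by rw [h4]
  -- lower bound via exp
  set C : ℝ := -(a * Real.log (f R₀ / a)) with hCdef
  have hC : 0 ≤ C := by
    rw [hCdef, neg_nonneg]
    have : Real.log (f R₀ / a) ≤ 0 :=
      Real.log_nonpos hratpos.le (by rw [div_le_one ha]; exact hfR₀a)
    exact mul_nonpos_of_nonneg_of_nonpos ha.le this
  have key2 : ∀ k : ℕ, a - θ ^ k * C ≤ f (R₀ + k * τ) := by
    intro k
    refine le_trans ?_ (key k)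
    rw [Real.rpow_def_of_pos hratpos]
    have := Real.add_one_le_exp (θ ^ k * Real.log (f R₀ / a))
    calc a - θ ^ k * C = a * (θ ^ k * Real.log (f R₀ / a) + 1) := by rw [hCdef]; ring
      _ ≤ a * Real.exp (θ ^ k * Real.log (f R₀ / a)) :=
          mul_le_mul_of_nonneg_left this ha.le
      _ = a * Real.exp (Real.log (f R₀ / a) * θ ^ k) := by ring_nf
  -- choose c
  set L : ℝ := Real.log θ with hLdef
  have hL : L < 0 := Real.log_neg hθpos hθlt1
  set c : ℝ := -L / (2 * τ) with hcdef
  have hc : 0 < c := by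
    apply div_pos (by linarith) (by linarith)
  have hLc : L = -(2 * c * τ) := by
    rw [hcdef]; field_simp
  set D : ℝ := C * Real.exp (2 * c * (R₀ + τ)) with hDdef
  have hD : 0 ≤ D := by positivity
  set ρ : ℝ := max (R₀ + τ) (Real.log (D + 1) / c + 1) with hρdef
  have hρpos : 0 < ρ := lt_of_lt_of_le (by linarith) (le_max_left _ _)
  obtain ⟨R, hRρ, hfR⟩ := h c hc ρ hρpos
  have hRR₀τ : R₀ + τ ≤ R := le_trans (le_max_left _ _) hRρ
  have hR0 : (0:ℝ) ≤ R := by linarith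
  set k : ℕ := ⌊(R - R₀) / τ⌋₊ with hkdef
  have hdiv0 : 0 ≤ (R - R₀) / τ := by
    apply div_nonneg (by linarith) hτ.le
  have hk1 : (k:ℝ) ≤ (R - R₀) / τ := Nat.floor_le hdiv0
  have hk2 : (R - R₀) / τ < k + 1 := Nat.lt_floor_add_one _
  have hkR : R₀ + k * τ ≤ R := by
    have : (k:ℝ) * τ ≤ R - R₀ := by
      rw [← le_div_iff₀ hτ] ; exact hk1
    linarith
  have hmono' : f (R₀ + k * τ) ≤ f R := by
    have h0 : (0:ℝ) ≤ R₀ + k * τ := by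
      have : (0:ℝ) ≤ (k:ℝ) * τ := by positivity
      linarith
    exact hmono h0 hR0 hkR
  -- bound θ^k
  have hθk : θ ^ k ≤ Real.exp (2 * c * (R₀ + τ)) * Real.exp (-(2*c) * R) := by
    have hθexp : θ ^ k = Real.exp ((k:ℝ) * L) := by
      rw [← Real.exp_log hθpos, ← Real.exp_nat_mul]
    rw [hθexp, ← Real.exp_add]
    apply Real.exp_le_exp.mpr
    have hk3 : (R - R₀) / τ - 1 ≤ (k:ℝ) := by linarith
    have := mul_le_mul_of_nonpos_right hk3 hL.le
    calc (k:ℝ) * L ≤ ((R - R₀) / τ - 1) * L := this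
      _ = 2 * c * (R₀ + τ) + -(2*c) * R := by
          rw [hLc]; field_simp; ring
  have hθkC : θ ^ k * C ≤ D * Real.exp (-(2*c) * R) := by
    calc θ ^ k * C ≤ (Real.exp (2 * c * (R₀ + τ)) * Real.exp (-(2*c) * R)) * C :=
          mul_le_mul_of_nonneg_right hθk hC
      _ = D * Real.exp (-(2*c) * R) := by rw [hDdef]; ring
  -- D * exp(-2cR) < exp(-cR)
  have hcR : Real.log (D + 1) < c * R := by
    have h1 : Real.log (D + 1) / c + 1 ≤ R := le_trans (le_max_right _ _) hRρ
    have := mul_le_mul_of_nonneg_left h1 hc.le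
    rw [mul_add, mul_div_cancel₀ _ (ne_of_gt hc), mul_one] at this
    linarith
  have hDlt : D < Real.exp (c * R) := by
    calc D < D + 1 := by linarith
      _ = Real.exp (Real.log (D + 1)) := (Real.exp_log (by linarith)).symm
      _ ≤ Real.exp (c * R) := Real.exp_le_exp.mpr hcR.le
  have hfinal : D * Real.exp (-(2*c) * R) < Real.exp (-c * R) := by
    calc D * Real.exp (-(2*c) * R) < Real.exp (c * R) * Real.exp (-(2*c) * R) :=
          mul_lt_mul_of_pos_right hDlt (Real.exp_pos _)
      _ = Real.exp (-c * R) := by rw [← Real.exp_add]; ring_nf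
  have := key2 k
  linarith
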